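/- Let A be an abelian group, φ : A → A an additive endomorphism, and D a subgroup of A with φ(D) = D. Let φ̄ denote the endomorphism of A/D induced by φ. Then for all positive integers m and n, the quotient map A → A/D induces a group isomorphism from ker(φ^m)/φ^n(ker(φ^{n+m})) onto ker(φ̄^m)/φ̄^n(ker(φ̄^{n+m})). -/

import Mathlib

/-- Generic content of the snake-lemma argument for Proposition 5.1: if `φ` maps the
subgroup `D` onto itself and `φbar` is the induced endomorphism of `A ⧸ D`, then the
quotient map induces an isomorphism
`ker (φ^m) / φ^n (ker (φ^(n+m))) ≃+ ker (φbar^m) / φbar^n (ker (φbar^(n+m)))`. -/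
theorem stmt_4 {A : Type*} [AddCommGroup A] (D : AddSubgroup A)
    (φ : AddMonoid.End A) (hφD : ⇑φ '' (D : Set A) = (D : Set A))
    (φbar : AddMonoid.End (A ⧸ D))
    (hbar : ∀ a : A, φbar ((a : A) : A ⧸ D) = ((φ a : A) : A ⧸ D))
    (m n : ℕ) (hm : 0 < m) (hn : 0 < n) :
    ∃ e : (AddMonoidHom.ker (φ ^ m) ⧸
            ((AddSubgroup.map ((φ ^ n) : A →+ A)
                (AddMonoidHom.ker (φ ^ (n + m)))).addSubgroupOf
              (AddMonoidHom.ker (φ ^ m)))) ≃+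
          (AddMonoidHom.ker (φbar ^ m) ⧸
            ((AddSubgroup.map ((φbar ^ n) : (A ⧸ D) →+ (A ⧸ D))
                (AddMonoidHom.ker (φbar ^ (n + m)))).addSubgroupOf
              (AddMonoidHom.ker (φbar ^ m)))),
      ∀ (x : A) (hx : x ∈ AddMonoidHom.ker (φ ^ m))
        (hx' : ((x : A) : A ⧸ D) ∈ AddMonoidHom.ker (φbar ^ m)),
        e (QuotientAddGroup.mk ⟨x, hx⟩) = QuotientAddGroup.mk ⟨((x : A) : A ⧸ D), hx'⟩ := by
  -- iterated compatibility
  have hpow : ∀ (k : ℕ) (a : A), (φbar ^ k) ((a : A) : A ⧸ D) = (((φ ^ k) a : A) : A ⧸ D) := by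
    intro k
    induction k with
    | zero => intro a; simp
    | succ k ih =>
      intro a
      rw [pow_succ, pow_succ]
      have : ((φ ^ k) * φ : AddMonoid.End A) a = (φ ^ k) (φ a) := rfl
      rw [this]
      have : ((φbar ^ k) * φbar) ((a : A) : A ⧸ D) = (φbar ^ k) (φbar ((a : A) : A ⧸ D)) := rfl
      rw [this, hbar, ih]
  have hDmem : ∀ d : A, d ∈ D → φ d ∈ D := by
    intro d hd
    have : φ d ∈ ⇑φ '' (D : Set A) := ⟨d, hd, rfl⟩
    rwa [hφD] at this
  have hDmap : ∀ (k : ℕ) (d : A), d ∈ D → (φ ^ k) d ∈ D := by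
    intro k
    induction k with
    | zero => intro d hd; simpa using hd
    | succ k ih =>
      intro d hd
      rw [pow_succ]
      exact ih _ (hDmem d hd)
  have hDsurj : ∀ (k : ℕ) (d : A), d ∈ D → ∃ c ∈ D, (φ ^ k) c = d := by
    intro k
    induction k with
    | zero => intro d hd; exact ⟨d, hd, rfl⟩
    | succ k ih =>
      intro d hd
      have : d ∈ ⇑φ '' (D : Set A) := by rw [hφD]; exact hd
      obtain ⟨d', hd', hφd'⟩ := this
      obtain ⟨c, hc, hφc⟩ := ih d' hd'
      refine ⟨c, hc, ?_⟩
      rw [pow_succ']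
      show φ ((φ ^ k) c) = d
      rw [hφc, hφd']
  have hker : ∀ (k : ℕ) (a : A),
      ((a : A) : A ⧸ D) ∈ AddMonoidHom.ker (φbar ^ k) ↔ (φ ^ k) a ∈ D := by
    intro k a
    show (φbar ^ k) ((a : A) : A ⧸ D) = 0 ↔ _
    rw [hpow, QuotientAddGroup.eq_zero_iff]
  set K : AddSubgroup A := AddMonoidHom.ker (φ ^ m) with hK
  set Kbar : AddSubgroup (A ⧸ D) := AddMonoidHom.ker (φbar ^ m) with hKbar
  set Sbar : AddSubgroup Kbar :=
    (AddSubgroup.map ((φbar ^ n) : (A ⧸ D) →+ (A ⧸ D))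
      (AddMonoidHom.ker (φbar ^ (n + m)))).addSubgroupOf Kbar with hSbar
  set S : AddSubgroup K :=
    (AddSubgroup.map ((φ ^ n) : A →+ A) (AddMonoidHom.ker (φ ^ (n + m)))).addSubgroupOf K
    with hS
  -- the restricted hom K →+ Kbar
  have hmemKbar : ∀ x : K, ((x : A) : A ⧸ D) ∈ Kbar := by
    intro x
    rw [hKbar, hker]
    have hx : (φ ^ m) (x : A) = 0 := x.2
    rw [hx]; exact zero_mem D
  let h : K →+ Kbar :=
    AddMonoidHom.codRestrict ((QuotientAddGroup.mk' D).comp K.subtype) Kbar hmemKbar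
  let f : K →+ Kbar ⧸ Sbar := (QuotientAddGroup.mk' Sbar).comp h
  have hf_apply : ∀ x : K, f x = QuotientAddGroup.mk ⟨((x : A) : A ⧸ D), hmemKbar x⟩ := by
    intro x; rfl
  -- surjectivity
  have hfsurj : Function.Surjective f := by
    intro q
    induction q using QuotientAddGroup.induction_on with
    | H y =>
      obtain ⟨ybar, hy⟩ := y
      obtain ⟨a, rfl⟩ := QuotientAddGroup.mk_surjective ybar
      have haD : (φ ^ m) a ∈ D := (hker m a).1 hy
      obtain ⟨d, hd, hφd⟩ := hDsurj m _ haD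
      have hadK : a - d ∈ K := by
        show (φ ^ m) (a - d) = 0
        rw [map_sub, hφd, sub_self]
      refine ⟨(⟨a - d, hadK⟩ : K), ?_⟩
      rw [hf_apply]
      congr 1
      ext
      show (((a - d : A) : A ⧸ D)) = ((a : A) : A ⧸ D)
      rw [QuotientAddGroup.mk_sub]
      rw [(QuotientAddGroup.eq_zero_iff d).2 hd, sub_zero]
  -- kernel
  have hfker : f.ker = S := by
    ext x
    obtain ⟨x, hx⟩ := x
    constructor
    · intro hfx
      rw [AddMonoidHom.mem_ker, hf_apply] at hfx
      have : (⟨((x : A) : A ⧸ D), hmemKbar ⟨x, hx⟩⟩ : Kbar) ∈ Sbar :=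
        (QuotientAddGroup.eq_zero_iff _).1 hfx
      rw [hSbar, AddSubgroup.mem_addSubgroupOf] at this
      obtain ⟨ybar, hy, hyx⟩ := AddSubgroup.mem_map.1 this
      obtain ⟨b, rfl⟩ := QuotientAddGroup.mk_surjective ybar
      have hbD : (φ ^ (n + m)) b ∈ D := (hker (n + m) b).1 hy
      obtain ⟨d, hd, hφd⟩ := hDsurj (n + m) _ hbD
      have hb' : (φ ^ (n + m)) (b - d) = 0 := by rw [map_sub, hφd, sub_self]
      -- x - φ^n (b - d) ∈ D
      have hxd : x - (φ ^ n) (b - d) ∈ D := by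
        rw [← QuotientAddGroup.eq_zero_iff, QuotientAddGroup.mk_sub]
        have h1 : (((φ ^ n) (b - d) : A) : A ⧸ D) = (φbar ^ n) (((b - d : A) : A ⧸ D)) :=
          (hpow n (b - d)).symm
        have h2 : (((b - d : A) : A ⧸ D)) = ((b : A) : A ⧸ D) := by
          rw [QuotientAddGroup.mk_sub, (QuotientAddGroup.eq_zero_iff d).2 hd, sub_zero]
        rw [h1, h2]
        exact sub_eq_zero.2 hyx.symm
      set d' := x - (φ ^ n) (b - d) with hd'
      have hφmd' : (φ ^ m) d' = 0 := by
        rw [hd', map_sub]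
        have hxm : (φ ^ m) x = 0 := hx
        have : (φ ^ m) ((φ ^ n) (b - d)) = (φ ^ (n + m)) (b - d) := by
          rw [add_comm, pow_add]; rfl
        rw [hxm, this, hb', sub_self]
      obtain ⟨c, hc, hφc⟩ := hDsurj n d' hxd
      have hcker : (φ ^ (n + m)) c = 0 := by
        have : (φ ^ (n + m)) c = (φ ^ m) ((φ ^ n) c) := by
          rw [add_comm, pow_add]; rfl
        rw [this, hφc, hφmd']
      rw [hS, AddSubgroup.mem_addSubgroupOf]
      apply AddSubgroup.mem_map.2
      refine ⟨(b - d) + c, ?_, ?_⟩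
      · show (φ ^ (n + m)) (b - d + c) = 0
        rw [map_add, hb', hcker, add_zero]
      · show (φ ^ n) (b - d + c) = x
        rw [map_add, hφc, hd']
        abel
    · intro hxS
      rw [hS, AddSubgroup.mem_addSubgroupOf] at hxS
      obtain ⟨b, hb, hbx⟩ := AddSubgroup.mem_map.1 hxS
      rw [AddMonoidHom.mem_ker, hf_apply, QuotientAddGroup.eq_zero_iff,
        hSbar, AddSubgroup.mem_addSubgroupOf]
      apply AddSubgroup.mem_map.2
      refine ⟨((b : A) : A ⧸ D), ?_, ?_⟩
      · show (φbar ^ (n + m)) ((b : A) : A ⧸ D) = 0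
        rw [hpow]
        have : (φ ^ (n + m)) b = 0 := hb
        rw [this]
        simp
      · show (φbar ^ n) ((b : A) : A ⧸ D) = ((x : A) : A ⧸ D)
        rw [hpow]
        exact congrArg _ hbx
  refine ⟨(QuotientAddGroup.quotientAddEquivOfEq hfker.symm).trans
    (QuotientAddGroup.quotientKerEquivOfSurjective f hfsurj), ?_⟩
  intro x hx hx'
  have : (QuotientAddGroup.quotientAddEquivOfEq hfker.symm)
      (QuotientAddGroup.mk ⟨x, hx⟩) = QuotientAddGroup.mk ⟨x, hx⟩ := rfl
  rw [AddEquiv.trans_apply, this]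
  show QuotientAddGroup.kerLift f (QuotientAddGroup.mk ⟨x, hx⟩) = _
  rw [QuotientAddGroup.kerLift_mk, hf_apply]
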